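/- In the k-boundary setting, let c < d be consecutive points of the set {0, 1} ∪ {discontinuity points of g} (so g is constant on (c,d)). If some coordinate a_i of the optimal parameter vector θ₀ equals c or equals d, then f_{θ₀}(x) = g(x) for μ-a.e. x ∈ (c,d). -/

import Mathlib

open MeasureTheory Set Filter

noncomputable section

open scoped Classical in
/-- The k-boundary hypothesis with breakpoints `θ`: the alternating step
function starting at value `0`, i.e. `f_θ(x) = (#{i : θ i ≤ x}) mod 2`. -/
noncomputable def kBoundary {k : ℕ} (θ : Fin k → ℝ) (x : ℝ) : Bool :=
  decide ((Finset.univ.filter fun i => θ i ≤ x).card % 2 = 1)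

open scoped Classical in
lemma kBoundary_congr {k : ℕ} (θ θ' : Fin k → ℝ) (x : ℝ)
    (h : ∀ i, θ i ≤ x ↔ θ' i ≤ x) : kBoundary θ' x = kBoundary θ x := by
  have key : (Finset.univ.filter fun i => θ i ≤ x)
      = (Finset.univ.filter fun i => θ' i ≤ x) := by
    ext i; simp [h i]
  simp only [kBoundary, key]

open scoped Classical in
lemma kBoundary_congr' {k : ℕ} (θ : Fin k → ℝ) (x y : ℝ)
    (h : ∀ i, θ i ≤ x ↔ θ i ≤ y) : kBoundary θ x = kBoundary θ y := by
  have key : (Finset.univ.filter fun i => θ i ≤ x)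
      = (Finset.univ.filter fun i => θ i ≤ y) := by
    ext i; simp [h i]
  simp only [kBoundary, key]

open scoped Classical in
lemma kBoundary_flip {k : ℕ} (θ θ' : Fin k → ℝ) (i₀ : Fin k) (x : ℝ)
    (h : ∀ i, i ≠ i₀ → (θ i ≤ x ↔ θ' i ≤ x)) (h1 : θ i₀ ≤ x) (h2 : ¬ θ' i₀ ≤ x) :
    kBoundary θ' x = !(kBoundary θ x) := by
  have key : (Finset.univ.filter fun i => θ i ≤ x)
      = insert i₀ (Finset.univ.filter fun i => θ' i ≤ x) := by
    ext i
    rcases eq_or_ne i i₀ with rfl | hi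
    · simp [h1, h2]
    · simp [hi, h i hi]
  have hni : i₀ ∉ (Finset.univ.filter fun i => θ' i ≤ x) := by simp [h2]
  simp only [kBoundary, key, Finset.card_insert_of_notMem hni]
  set n := (Finset.univ.filter fun i => θ' i ≤ x).card
  have hpar : (n % 2 = 1) ↔ ¬((n + 1) % 2 = 1) := by omega
  rw [decide_eq_decide.mpr hpar, decide_not]

/-- in the k-boundary setting, let `c < d` be consecutive points
of `{0,1} ∪ {discontinuity points of g}` (here `s` is exactly the set of
discontinuity points of `g`). If some coordinate of the optimal parameter `θ₀`
equals `c` or `d`, then `f_{θ₀} = g` μ-a.e. on `(c,d)`. -/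
theorem kBoundary_agrees_on_touched_interval
    {k M : ℕ} (μ : Measure ℝ) [IsProbabilityMeasure μ]
    (habs : μ ≪ volume.restrict (Icc (0 : ℝ) 1))
    (habs' : volume.restrict (Icc (0 : ℝ) 1) ≪ μ)
    (g : ℝ → Bool) (s : Finset ℝ) (hscard : s.card ≤ M)
    (hsIoo : ∀ b ∈ s, b ∈ Ioo (0 : ℝ) 1)
    (hstep : ∀ x y : ℝ, x ≤ y → (∀ b ∈ s, ¬(x < b ∧ b ≤ y)) → g x = g y)
    (hdisc : ∀ b : ℝ, b ∈ s ↔ ¬ (∀ᶠ y in nhds b, g y = g b))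
    (θ₀ : Fin k → ℝ) (hθ₀mono : Monotone θ₀) (hθ₀mem : ∀ i, θ₀ i ∈ Icc (0 : ℝ) 1)
    (hθ₀opt : ∀ θ : Fin k → ℝ, Monotone θ → (∀ i, θ i ∈ Icc (0 : ℝ) 1) →
      μ {x | kBoundary θ₀ x ≠ g x} ≤ μ {x | kBoundary θ x ≠ g x})
    (c d : ℝ) (hcd : c < d)
    (hc : c ∈ insert (0 : ℝ) (insert 1 (↑s : Set ℝ)))
    (hd : d ∈ insert (0 : ℝ) (insert 1 (↑s : Set ℝ)))
    (hconsec : ∀ b ∈ insert (0 : ℝ) (insert 1 (↑s : Set ℝ)), ¬(c < b ∧ b < d))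
    (htouch : ∃ i : Fin k, θ₀ i = c ∨ θ₀ i = d) :
    ∀ᵐ x ∂μ, x ∈ Ioo c d → kBoundary θ₀ x = g x := by
  classical
  by_contra hae
  rw [ae_iff] at hae
  -- basic endpoint facts
  have hIcc01 : ∀ x ∈ insert (0 : ℝ) (insert 1 (↑s : Set ℝ)), x ∈ Icc (0 : ℝ) 1 := by
    intro x hx
    rcases hx with rfl | rfl | hx
    · exact ⟨le_refl 0, zero_le_one⟩
    · exact ⟨zero_le_one, le_refl 1⟩
    · exact Ioo_subset_Icc_self (hsIoo x hx)
  have hc01 : c ∈ Icc (0 : ℝ) 1 := hIcc01 c hc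
  have hd01 : d ∈ Icc (0 : ℝ) 1 := hIcc01 d hd
  have hsing : ∀ x : ℝ, μ {x} = 0 := by
    intro x
    apply habs
    rw [Measure.restrict_apply (measurableSet_singleton x)]
    exact measure_mono_null inter_subset_left (measure_singleton x)
  haveI : NullSingletonClass μ := ⟨hsing⟩
  set T : Finset ℝ :=
    insert c (insert d ((Finset.univ.image θ₀).filter (· ∈ Icc c d))) with hT
  have hTnull : μ ↑T = 0 := T.countable_toSet.measure_zero μ
  have hbad : μ ({a | ¬(a ∈ Ioo c d → kBoundary θ₀ a = g a)} \ ↑T) ≠ 0 := by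
    rw [measure_diff_null hTnull]; exact hae
  obtain ⟨x₀, hx₀bad, hx₀T⟩ := nonempty_of_measure_ne_zero hbad
  simp only [mem_setOf_eq] at hx₀bad
  push_neg at hx₀bad
  obtain ⟨hx₀cd, hx₀ne⟩ := hx₀bad
  -- the gap (p, q) around x₀
  have hcT : c ∈ T.filter (· < x₀) :=
    Finset.mem_filter.mpr ⟨Finset.mem_insert_self _ _, hx₀cd.1⟩
  have hdT : d ∈ T.filter (x₀ < ·) :=
    Finset.mem_filter.mpr ⟨Finset.mem_insert_of_mem (Finset.mem_insert_self _ _), hx₀cd.2⟩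
  set p := (T.filter (· < x₀)).max' ⟨c, hcT⟩ with hpdef
  set q := (T.filter (x₀ < ·)).min' ⟨d, hdT⟩ with hqdef
  have hpmem := (T.filter (· < x₀)).max'_mem ⟨c, hcT⟩
  have hqmem := (T.filter (x₀ < ·)).min'_mem ⟨d, hdT⟩
  have hpT : p ∈ T := (Finset.mem_filter.mp hpmem).1
  have hpx : p < x₀ := (Finset.mem_filter.mp hpmem).2
  have hqT : q ∈ T := (Finset.mem_filter.mp hqmem).1
  have hxq : x₀ < q := (Finset.mem_filter.mp hqmem).2
  have hcp : c ≤ p := Finset.le_max' _ c hcT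
  have hqd : q ≤ d := Finset.min'_le _ d hdT
  have hpq : p < q := hpx.trans hxq
  have hgap : ∀ t ∈ T, ¬(p < t ∧ t < q) := by
    rintro t ht ⟨h1, h2⟩
    rcases lt_trichotomy t x₀ with h | h | h
    · have hle := Finset.le_max' (T.filter (· < x₀)) t (Finset.mem_filter.mpr ⟨ht, h⟩)
      rw [← hpdef] at hle
      exact absurd hle (not_le.mpr h1)
    · exact hx₀T (Finset.mem_coe.mpr (h ▸ ht))
    · have hle := Finset.min'_le (T.filter (x₀ < ·)) t (Finset.mem_filter.mpr ⟨ht, h⟩)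
      rw [← hqdef] at hle
      exact absurd hle (not_le.mpr h2)
  have hvals : ∀ i, θ₀ i ≤ p ∨ q ≤ θ₀ i := by
    intro i
    by_contra h
    push_neg at h
    obtain ⟨h1, h2⟩ := h
    have hmem : θ₀ i ∈ T := by
      rw [hT]
      refine Finset.mem_insert_of_mem (Finset.mem_insert_of_mem ?_)
      refine Finset.mem_filter.mpr ⟨Finset.mem_image.mpr ⟨i, Finset.mem_univ i, rfl⟩, ?_⟩
      exact ⟨hcp.trans h1.le, h2.le.trans hqd⟩
    exact hgap _ hmem ⟨h1, h2⟩
  have hfilt : ∀ x ∈ Ioo p q, ∀ i, (θ₀ i ≤ x ↔ θ₀ i ≤ p) := by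
    intro x hx i
    rcases hvals i with h | h
    · exact iff_of_true (h.trans hx.1.le) h
    · exact iff_of_false (not_le.mpr (lt_of_lt_of_le hx.2 h))
        (not_le.mpr (lt_of_lt_of_le hpq h))
  have hx₀pq : x₀ ∈ Ioo p q := ⟨hpx, hxq⟩
  have hfconst : ∀ x ∈ Ioo p q, kBoundary θ₀ x = kBoundary θ₀ x₀ := by
    intro x hx
    exact kBoundary_congr' θ₀ x x₀ fun i => (hfilt x hx i).trans (hfilt x₀ hx₀pq i).symm
  have hgconst : ∀ x ∈ Ioo c d, g x = g x₀ := by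
    have key : ∀ u v : ℝ, u ∈ Ioo c d → v ∈ Ioo c d → u ≤ v → g u = g v := by
      intro u v hu hv huv
      apply hstep u v huv
      rintro b hb ⟨hb1, hb2⟩
      refine hconsec b ?_ ⟨lt_trans hu.1 hb1, lt_of_le_of_lt hb2 hv.2⟩
      exact Set.mem_insert_iff.mpr (Or.inr (Set.mem_insert_iff.mpr (Or.inr hb)))
    intro x hx
    rcases le_total x x₀ with h | h
    · exact key x x₀ hx hx₀cd h
    · exact (key x₀ x hx₀cd hx h).symm
  have hIoosub : Ioo p q ⊆ Ioo c d := Ioo_subset_Ioo hcp hqd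
  have hfx₀ : kBoundary θ₀ x₀ = !(g x₀) := by
    revert hx₀ne
    cases kBoundary θ₀ x₀ <;> cases g x₀ <;> simp
  have hIooA : Ioo p q ⊆ {x | kBoundary θ₀ x ≠ g x} := by
    intro x hx
    simp only [mem_setOf_eq]
    rw [hfconst x hx, hfx₀, hgconst x (hIoosub hx)]
    simp
  -- the contradiction machine: a flipped hypothesis strictly improves the risk
  have hfinish : ∀ θ' : Fin k → ℝ, Monotone θ' → (∀ i, θ' i ∈ Icc (0 : ℝ) 1) →
      (∀ x ∈ Ioo p q, kBoundary θ' x = !(kBoundary θ₀ x)) →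
      (∀ x : ℝ, x < p ∨ q ≤ x → kBoundary θ' x = kBoundary θ₀ x) → False := by
    intro θ' hm hmem hflip heqq
    set A := {x | kBoundary θ₀ x ≠ g x} with hA
    set B := {x | kBoundary θ' x ≠ g x} with hB
    have hopt := hθ₀opt θ' hm hmem
    have hsub : B ⊆ (A \ Ioo p q) ∪ {p} := by
      intro x hxB
      simp only [hB, mem_setOf_eq] at hxB
      by_cases hx1 : x ∈ Ioo p q
      · exfalso
        apply hxB
        rw [hflip x hx1, hfconst x hx1, hfx₀, hgconst x (hIoosub hx1)]
        simp
      · rcases eq_or_ne x p with rfl | hxp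
        · exact Or.inr rfl
        · left
          have hor : x < p ∨ q ≤ x := by
            simp only [mem_Ioo, not_and, not_lt] at hx1
            rcases lt_or_ge x p with h | h
            · exact Or.inl h
            · rcases lt_or_eq_of_le h with h' | h'
              · exact Or.inr (hx1 h')
              · exact absurd h'.symm hxp
          refine ⟨?_, hx1⟩
          simp only [hA, mem_setOf_eq]
          rw [← heqq x hor]
          exact hxB
    have hBle : μ B ≤ μ (A \ Ioo p q) := by
      calc μ B ≤ μ ((A \ Ioo p q) ∪ {p}) := measure_mono hsub
        _ ≤ μ (A \ Ioo p q) + μ {p} := measure_union_le _ _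
        _ = μ (A \ Ioo p q) := by rw [hsing p, add_zero]
    have hsplit : μ (A ∩ Ioo p q) + μ (A \ Ioo p q) = μ A :=
      measure_inter_add_diff A measurableSet_Ioo
    have hAI : A ∩ Ioo p q = Ioo p q := Set.inter_eq_self_of_subset_right hIooA
    rw [hAI] at hsplit
    have hpos : μ (Ioo p q) ≠ 0 := by
      intro h0
      have hv := habs' h0
      rw [Measure.restrict_apply measurableSet_Ioo] at hv
      have hsub01 : Ioo p q ⊆ Icc (0 : ℝ) 1 :=
        Ioo_subset_Icc_self.trans (Icc_subset_Icc (hc01.1.trans hcp) (hqd.trans hd01.2))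
      rw [Set.inter_eq_self_of_subset_left hsub01, Real.volume_Ioo] at hv
      have := ENNReal.ofReal_eq_zero.mp hv
      linarith
    have hle : μ (Ioo p q) + μ (A \ Ioo p q) ≤ 0 + μ (A \ Ioo p q) := by
      rw [zero_add]
      calc μ (Ioo p q) + μ (A \ Ioo p q) = μ A := hsplit
        _ ≤ μ B := hopt
        _ ≤ μ (A \ Ioo p q) := hBle
    have := ENNReal.le_of_add_le_add_right (measure_ne_top μ _) hle
    exact hpos (le_zero_iff.mp this)
  -- now build the improved hypothesis, by cases
  by_cases hep : ∃ i, θ₀ i = p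
  · obtain ⟨iw, hiw⟩ := hep
    set Sp := Finset.univ.filter (fun i => θ₀ i = p) with hSp
    have hSpne : Sp.Nonempty := ⟨iw, by simp [hSp, hiw]⟩
    set i₀ := Sp.max' hSpne with hi₀def
    have hi₀ : θ₀ i₀ = p := by
      have := Sp.max'_mem hSpne
      simpa [hSp] using this
    have hgt : ∀ j, i₀ < j → q ≤ θ₀ j := by
      intro j hj
      rcases hvals j with h | h
      · have h1 : p ≤ θ₀ j := hi₀ ▸ hθ₀mono hj.le
        have h2 : j ∈ Sp := by simp [hSp, le_antisymm h h1]
        exact absurd (Finset.le_max' _ j h2) (not_le.mpr hj)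
      · exact h
    set θ' := Function.update θ₀ i₀ q with hθ'
    refine hfinish θ' ?_ ?_ ?_ ?_
    · intro a b hab
      rcases eq_or_ne a i₀ with rfl | ha
      · rcases eq_or_ne b i₀ with rfl | hb
        · exact le_refl _
        · rw [hθ', Function.update_self, Function.update_of_ne hb]
          exact hgt b (lt_of_le_of_ne hab (Ne.symm hb))
      · rcases eq_or_ne b i₀ with rfl | hb
        · rw [hθ', Function.update_of_ne ha, Function.update_self]
          exact le_trans (hθ₀mono hab) (hi₀ ▸ hpq.le : θ₀ i₀ ≤ q)
        · rw [hθ', Function.update_of_ne ha, Function.update_of_ne hb]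
          exact hθ₀mono hab
    · intro j
      rcases eq_or_ne j i₀ with rfl | hj
      · rw [hθ', Function.update_self]
        exact ⟨hc01.1.trans (hcp.trans hpq.le), hqd.trans hd01.2⟩
      · rw [hθ', Function.update_of_ne hj]; exact hθ₀mem j
    · intro x hx
      apply kBoundary_flip θ₀ θ' i₀ x
      · intro i hi; rw [hθ', Function.update_of_ne hi]
      · rw [hi₀]; exact hx.1.le
      · rw [hθ', Function.update_self]; exact not_le.mpr hx.2
    · intro x hor
      apply kBoundary_congr θ₀ θ' x
      intro i
      rcases eq_or_ne i i₀ with rfl | hi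
      · rw [hθ', Function.update_self, hi₀]
        rcases hor with h | h
        · exact iff_of_false (not_le.mpr h) (not_le.mpr (h.trans hpq))
        · exact iff_of_true (hpq.le.trans h) h
      · rw [hθ', Function.update_of_ne hi]
  · by_cases heq : ∃ i, θ₀ i = q
    · obtain ⟨iw, hiw⟩ := heq
      set Sq := Finset.univ.filter (fun i => θ₀ i = q) with hSq
      have hSqne : Sq.Nonempty := ⟨iw, by simp [hSq, hiw]⟩
      set i₀ := Sq.min' hSqne with hi₀def
      have hi₀ : θ₀ i₀ = q := by
        have := Sq.min'_mem hSqne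
        simpa [hSq] using this
      have hlt : ∀ j, j < i₀ → θ₀ j ≤ p := by
        intro j hj
        rcases hvals j with h | h
        · exact h
        · have h1 : θ₀ j ≤ q := hi₀ ▸ hθ₀mono hj.le
          have h2 : j ∈ Sq := by simp [hSq, le_antisymm h1 h]
          exact absurd (Finset.min'_le _ j h2) (not_le.mpr hj)
      set θ' := Function.update θ₀ i₀ p with hθ'
      refine hfinish θ' ?_ ?_ ?_ ?_
      · intro a b hab
        rcases eq_or_ne a i₀ with rfl | ha
        · rcases eq_or_ne b i₀ with rfl | hb
          · exact le_refl _
          · rw [hθ', Function.update_self, Function.update_of_ne hb]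
            exact le_trans hpq.le (hi₀ ▸ hθ₀mono hab : q ≤ θ₀ b)
        · rcases eq_or_ne b i₀ with rfl | hb
          · rw [hθ', Function.update_of_ne ha, Function.update_self]
            exact hlt a (lt_of_le_of_ne hab ha)
          · rw [hθ', Function.update_of_ne ha, Function.update_of_ne hb]
            exact hθ₀mono hab
      · intro j
        rcases eq_or_ne j i₀ with rfl | hj
        · rw [hθ', Function.update_self]
          exact ⟨hc01.1.trans hcp, (hpq.le.trans hqd).trans hd01.2⟩
        · rw [hθ', Function.update_of_ne hj]; exact hθ₀mem j
      · intro x hx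
        have := kBoundary_flip θ' θ₀ i₀ x
          (fun i hi => by rw [hθ', Function.update_of_ne hi])
          (by rw [hθ', Function.update_self]; exact hx.1.le)
          (by rw [hi₀]; exact not_le.mpr hx.2)
        rw [this, Bool.not_not]
      · intro x hor
        apply kBoundary_congr θ₀ θ' x
        intro i
        rcases eq_or_ne i i₀ with rfl | hi
        · rw [hθ', Function.update_self, hi₀]
          rcases hor with h | h
          · exact iff_of_false (not_le.mpr (h.trans hpq)) (not_le.mpr h)
          · exact iff_of_true h (hpq.le.trans h)
        · rw [hθ', Function.update_of_ne hi]
    · -- no breakpoint at p or q: then p = c, q = d, contradicting htouch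
      exfalso
      have hpc : p = c := by
        rw [hT] at hpT
        simp only [Finset.mem_insert, Finset.mem_filter, Finset.mem_image] at hpT
        rcases hpT with h | h | ⟨⟨j, _, hj⟩, _⟩
        · exact h
        · exact absurd (h ▸ hpx.trans hxq |>.trans_le hqd) (lt_irrefl d)
        · exact absurd ⟨j, hj⟩ hep
      have hqd' : q = d := by
        rw [hT] at hqT
        simp only [Finset.mem_insert, Finset.mem_filter, Finset.mem_image] at hqT
        rcases hqT with h | h | ⟨⟨j, _, hj⟩, _⟩
        · exact absurd (h ▸ hcp.trans_lt hpq) (lt_irrefl c)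
        · exact h
        · exact absurd ⟨j, hj⟩ heq
      obtain ⟨i, hi | hi⟩ := htouch
      · exact hep ⟨i, hi.trans hpc.symm⟩
      · exact heq ⟨i, hi.trans hqd'.symm⟩

end
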